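/- Let ε₁, ε₂ ∈ M₂(k) be nonzero nilpotent matrices over a nonarchimedean local field k with uniformizer π, satisfying ε₁ε₂ + ε₂ε₁ = π²·I. Then for a natural number t, there exists a maximal order (an O-lattice subring conjugate to M₂(O)) containing both ε₁ and ε₂/π^t if and only if t ≤ 2. -/

import Mathlib

/-- For nonzero nilpotents `ε₁, ε₂ ∈ M₂(k)` with `ε₁ε₂ + ε₂ε₁ = π²·I`, there is a maximal
order containing `ε₁` and `ε₂/π^t` iff `t ≤ 2`. -/
theorem stmt_14 (O : Type*) [CommRing O] [IsDomain O] [IsDiscreteValuationRing O]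
    [IsAdicComplete (IsLocalRing.maximalIdeal O) O] [Finite (IsLocalRing.ResidueField O)]
    (K : Type*) [Field K] [Algebra O K] [IsFractionRing O K]
    (π : O) (hπ : Irreducible π)
    (ε₁ ε₂ : Matrix (Fin 2) (Fin 2) K)
    (h1 : ε₁ ≠ 0) (h1n : ε₁ * ε₁ = 0) (h2 : ε₂ ≠ 0) (h2n : ε₂ * ε₂ = 0)
    (hrel : ε₁ * ε₂ + ε₂ * ε₁ = (algebraMap O K π) ^ 2 • (1 : Matrix (Fin 2) (Fin 2) K))
    (t : ℕ) :
    (∃ g : Matrix.GeneralLinearGroup (Fin 2) K,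
      (∀ i j : Fin 2, ((↑g⁻¹ : Matrix (Fin 2) (Fin 2) K) * ε₁ * (↑g : Matrix (Fin 2) (Fin 2) K)) i j
          ∈ Set.range (algebraMap O K)) ∧
      (∀ i j : Fin 2, ((↑g⁻¹ : Matrix (Fin 2) (Fin 2) K) * (((algebraMap O K π) ^ t)⁻¹ • ε₂) *
          (↑g : Matrix (Fin 2) (Fin 2) K)) i j ∈ Set.range (algebraMap O K))) ↔ t ≤ 2 := by
  have hinj : Function.Injective (algebraMap O K) := IsFractionRing.injective O K
  set p : K := algebraMap O K π with hp
  have hπ0 : π ≠ 0 := hπ.ne_zero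
  have hp0 : p ≠ 0 := by
    intro h
    exact hπ0 (hinj (by simpa [hp] using h))
  constructor
  · rintro ⟨g, hg1, hg2⟩
    by_contra ht
    push_neg at ht
    -- 2 < t
    set G : Matrix (Fin 2) (Fin 2) K := (↑g : Matrix (Fin 2) (Fin 2) K) with hG
    set Gi : Matrix (Fin 2) (Fin 2) K := (↑g⁻¹ : Matrix (Fin 2) (Fin 2) K) with hGi
    set A : Matrix (Fin 2) (Fin 2) K := Gi * ε₁ * G with hA
    set B : Matrix (Fin 2) (Fin 2) K := Gi * ((p ^ t)⁻¹ • ε₂) * G with hB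
    have hgg : G * Gi = 1 := g.mul_inv
    have hgg' : Gi * G = 1 := g.inv_mul
    have hABBA : A * B + B * A = ((p ^ t)⁻¹ * p ^ 2) • (1 : Matrix (Fin 2) (Fin 2) K) := by
      have e1 : A * B = Gi * (ε₁ * ((p ^ t)⁻¹ • ε₂)) * G := by
        rw [hA, hB,
          show Gi * ε₁ * G * (Gi * ((p ^ t)⁻¹ • ε₂) * G)
            = Gi * ε₁ * (G * Gi) * (((p ^ t)⁻¹ • ε₂) * G) from by noncomm_ring,
          hgg, mul_one]
        noncomm_ring
      have e2 : B * A = Gi * (((p ^ t)⁻¹ • ε₂) * ε₁) * G := by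
        rw [hA, hB,
          show Gi * ((p ^ t)⁻¹ • ε₂) * G * (Gi * ε₁ * G)
            = Gi * ((p ^ t)⁻¹ • ε₂) * (G * Gi) * (ε₁ * G) from by noncomm_ring,
          hgg, mul_one]
        noncomm_ring
      rw [e1, e2, ← add_mul, ← mul_add]
      have : ε₁ * ((p ^ t)⁻¹ • ε₂) + (p ^ t)⁻¹ • ε₂ * ε₁
          = (p ^ t)⁻¹ • (ε₁ * ε₂ + ε₂ * ε₁) := by
        rw [smul_add, Matrix.mul_smul, Matrix.smul_mul]
      rw [this, hrel]
      rw [smul_smul, Matrix.mul_smul, Matrix.smul_mul, mul_one, hgg']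
    have hmem : ((p ^ t)⁻¹ * p ^ 2) ∈ Set.range (algebraMap O K) := by
      have hAB : (A * B) 0 0 ∈ Set.range (algebraMap O K) := by
        rw [Matrix.mul_apply, Fin.sum_univ_two]
        obtain ⟨a1, ha1⟩ := hg1 0 0
        obtain ⟨a2, ha2⟩ := hg1 0 1
        obtain ⟨b1, hb1⟩ := hg2 0 0
        obtain ⟨b2, hb2⟩ := hg2 1 0
        exact ⟨a1 * b1 + a2 * b2, by simp only [map_add, map_mul, ha1, ha2, hb1, hb2]⟩
      have hBA : (B * A) 0 0 ∈ Set.range (algebraMap O K) := by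
        rw [Matrix.mul_apply, Fin.sum_univ_two]
        obtain ⟨a1, ha1⟩ := hg1 0 0
        obtain ⟨a2, ha2⟩ := hg1 1 0
        obtain ⟨b1, hb1⟩ := hg2 0 0
        obtain ⟨b2, hb2⟩ := hg2 0 1
        exact ⟨b1 * a1 + b2 * a2, by simp only [map_add, map_mul, ha1, ha2, hb1, hb2]⟩
      obtain ⟨x, hx⟩ := hAB
      obtain ⟨y, hy⟩ := hBA
      refine ⟨x + y, ?_⟩
      have := congrFun (congrFun hABBA 0) 0
      simp only [Matrix.add_apply, Matrix.smul_apply, Matrix.one_apply_eq, smul_eq_mul,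
        mul_one] at this
      rw [map_add, hx, hy, this]
    -- derive contradiction
    obtain ⟨x, hx⟩ := hmem
    have htt : t = 2 + (t - 2) := by omega
    have hxx : algebraMap O K x * p ^ (t - 2) = 1 := by
      have hpt : p ^ t = p ^ 2 * p ^ (t - 2) := by rw [← pow_add, ← htt]
      rw [hx, hpt]
      field_simp
    have : algebraMap O K (x * π ^ (t - 2)) = algebraMap O K 1 := by
      rw [map_mul, map_pow, map_one, ← hp, hxx]
    have hunit : IsUnit π := by
      have h' : x * π ^ (t - 2) = 1 := hinj this
      have ht3 : t - 2 = (t - 3) + 1 := by omega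
      rw [ht3, pow_succ, ← mul_assoc] at h'
      exact IsUnit.of_mul_eq_one (a := π) (x * π ^ (t - 3)) (by linear_combination h')
    exact hπ.not_isUnit hunit
  · intro ht
    -- construct the conjugating matrix
    have hp20 : (p ^ 2 : K) ≠ 0 := pow_ne_zero _ hp0
    obtain ⟨i0, j0, hij⟩ : ∃ i j, ε₂ i j ≠ 0 := by
      by_contra h
      push_neg at h
      exact h2 (by ext i j; simp [h i j])
    set u : Fin 2 → K := Pi.single j0 1 with hu_def
    have hu : ε₂.mulVec u ≠ 0 := by
      intro h
      have := congrFun h i0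
      simp only [hu_def, Matrix.mulVec_single, Pi.zero_apply, mul_one] at this
      exact hij (by simpa using this)
    set v₂ : Fin 2 → K := (p ^ 2)⁻¹ • ε₂.mulVec u with hv2_def
    set v₁ : Fin 2 → K := ε₁.mulVec v₂ with hv1_def
    have hv2ne : v₂ ≠ 0 := smul_ne_zero (inv_ne_zero hp20) hu
    have h1v1 : ε₁.mulVec v₁ = 0 := by
      rw [hv1_def, Matrix.mulVec_mulVec, h1n, Matrix.zero_mulVec]
    have h2v2 : ε₂.mulVec v₂ = 0 := by
      rw [hv2_def, Matrix.mulVec_smul, Matrix.mulVec_mulVec, h2n, Matrix.zero_mulVec,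
        smul_zero]
    have h2v1 : ε₂.mulVec v₁ = (p ^ 2) • v₂ := by
      have h21 : ε₂ * ε₁ = (p ^ 2) • (1 : Matrix (Fin 2) (Fin 2) K) - ε₁ * ε₂ :=
        eq_sub_of_add_eq' hrel
      rw [hv1_def, Matrix.mulVec_mulVec, h21, Matrix.sub_mulVec, Matrix.smul_mulVec,
        Matrix.one_mulVec, ← Matrix.mulVec_mulVec, h2v2,
        Matrix.mulVec_zero, sub_zero]
    have hv1ne : v₁ ≠ 0 := by
      intro h
      rw [h, Matrix.mulVec_zero] at h2v1
      exact hv2ne (by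
        have := h2v1.symm
        rwa [smul_eq_zero, or_iff_right hp20] at this)
    set M : Matrix (Fin 2) (Fin 2) K := Matrix.of fun i j => ![v₁ i, v₂ i] j with hM_def
    set E : Matrix (Fin 2) (Fin 2) K := Matrix.of ![![0, 1], ![0, 0]] with hE_def
    set F : Matrix (Fin 2) (Fin 2) K := Matrix.of ![![0, 0], ![1, 0]] with hF_def
    have hME : ε₁ * M = M * E := by
      ext i j
      have t1 := congrFun h1v1 i
      have t2 : v₁ i = ε₁.mulVec v₂ i := by rw [hv1_def]
      simp only [Matrix.mulVec, dotProduct, Fin.sum_univ_two, Pi.zero_apply] at t1 t2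
      fin_cases j <;>
        simp only [hM_def, hE_def, Matrix.mul_apply, Fin.sum_univ_two, Matrix.of_apply,
          Matrix.cons_val', Matrix.cons_val_zero, Matrix.cons_val_one, Matrix.head_cons,
          Matrix.head_fin_const, Matrix.empty_val', Matrix.cons_val_fin_one, Fin.isValue,
          Fin.mk_zero, Fin.mk_one,
          mul_zero, mul_one, zero_add, add_zero] <;>
        first
          | linear_combination t1
          | linear_combination t2
          | linear_combination -t1
          | linear_combination -t2
    have hMF : ε₂ * M = M * ((p ^ 2) • F) := by
      ext i j
      have t1 := congrFun h2v1 i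
      have t2 := congrFun h2v2 i
      simp only [Matrix.mulVec, dotProduct, Fin.sum_univ_two, Pi.zero_apply, Pi.smul_apply,
        smul_eq_mul] at t1 t2
      fin_cases j <;>
        simp only [hM_def, hF_def, Matrix.mul_apply, Fin.sum_univ_two, Matrix.of_apply,
          Matrix.smul_apply, Matrix.cons_val', Matrix.cons_val_zero, Matrix.cons_val_one,
          Matrix.head_cons, Matrix.head_fin_const, Matrix.empty_val', Matrix.cons_val_fin_one,
          Fin.isValue, Fin.mk_zero, Fin.mk_one, smul_eq_mul, mul_zero, mul_one, zero_add, add_zero] <;>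
        first
          | linear_combination t1
          | linear_combination t2
          | linear_combination -t1
          | linear_combination -t2
    have hdet : M.det ≠ 0 := by
      intro hdet0
      obtain ⟨c, hc0, hc⟩ := (Matrix.exists_mulVec_eq_zero_iff).mpr hdet0
      have hc' : c 0 • v₁ + c 1 • v₂ = 0 := by
        ext i
        have := congrFun hc i
        simp only [Matrix.mulVec, dotProduct, Fin.sum_univ_two, hM_def, Matrix.of_apply,
          Matrix.cons_val_zero, Matrix.cons_val_one, Matrix.head_cons,
          Pi.zero_apply] at this
        simp only [Pi.add_apply, Pi.smul_apply, smul_eq_mul, Pi.zero_apply]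
        linear_combination this
      have key : c 1 • v₁ = 0 := by
        have := congrArg ε₁.mulVec hc'
        rwa [Matrix.mulVec_add, Matrix.mulVec_smul, Matrix.mulVec_smul, h1v1,
          ← hv1_def, smul_zero, zero_add, Matrix.mulVec_zero] at this
      have hc1 : c 1 = 0 := by
        rcases smul_eq_zero.mp key with h | h
        · exact h
        · exact absurd h hv1ne
      have hc00 : c 0 = 0 := by
        rw [hc1, zero_smul, add_zero] at hc'
        rcases smul_eq_zero.mp hc' with h | h
        · exact h
        · exact absurd h hv1ne
      exact hc0 (by ext i; fin_cases i <;> assumption)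
    have hMunit : IsUnit M := (Matrix.isUnit_iff_isUnit_det M).mpr hdet.isUnit
    set g0 : (Matrix (Fin 2) (Fin 2) K)ˣ := hMunit.unit with hg0
    have hval : (↑g0 : Matrix (Fin 2) (Fin 2) K) = M := hMunit.unit_spec
    have hinvM : (↑g0⁻¹ : Matrix (Fin 2) (Fin 2) K) * M = 1 := by
      rw [← hval]; exact g0.inv_mul
    refine ⟨g0, ?_, ?_⟩
    · intro i j
      have hconj : (↑g0⁻¹ : Matrix (Fin 2) (Fin 2) K) * ε₁ * (↑g0 : Matrix (Fin 2) (Fin 2) K)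
          = E := by
        rw [hval, mul_assoc, hME, ← mul_assoc, hinvM, one_mul]
      rw [hconj]
      fin_cases i <;> fin_cases j <;> simp [hE_def] <;>
        first
          | exact ⟨0, map_zero _⟩
          | exact ⟨1, map_one _⟩
    · intro i j
      have hconj : (↑g0⁻¹ : Matrix (Fin 2) (Fin 2) K) * ((p ^ t)⁻¹ • ε₂) *
          (↑g0 : Matrix (Fin 2) (Fin 2) K) = ((p ^ t)⁻¹ * p ^ 2) • F := by
        rw [hval, mul_assoc, Matrix.smul_mul, hMF, Matrix.mul_smul, Matrix.mul_smul,
          Matrix.mul_smul, ← mul_assoc, hinvM, one_mul, smul_smul]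
      have hscal : (p ^ t)⁻¹ * p ^ 2 = algebraMap O K (π ^ (2 - t)) := by
        rw [map_pow, ← hp]
        have h2t : p ^ 2 = p ^ t * p ^ (2 - t) := by rw [← pow_add]; congr 1; omega
        rw [h2t, ← mul_assoc, inv_mul_cancel₀ (pow_ne_zero _ hp0), one_mul]
      rw [hconj, hscal]
      fin_cases i <;> fin_cases j <;>
        simp only [hF_def, Matrix.smul_apply, Matrix.of_apply, Matrix.cons_val',
          Matrix.cons_val_zero, Matrix.cons_val_one, Matrix.head_cons, Matrix.head_fin_const,
          Matrix.empty_val', Matrix.cons_val_fin_one, Fin.isValue, Fin.mk_zero, Fin.mk_one,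
          smul_eq_mul, mul_zero, mul_one] <;>
        first
          | exact ⟨0, map_zero _⟩
          | exact ⟨π ^ (2 - t), rfl⟩
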